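/- Let V be a finite-dimensional real vector space, R ⊆ V a subspace, and θ a skew-symmetric bilinear form on R. Then L := {(X, α) : X ∈ R, α ∈ V*, α|_R = i_X θ} (where i_X θ denotes the linear functional Y ↦ θ(X,Y) on R) is a vector Dirac structure on V with pr₁(L) = R, whose induced bilinear form on R equals θ. -/

import Mathlib

section aux

variable {V : Type*} [AddCommGroup V] [Module ℝ V]
variable (R : Submodule ℝ V) (θ : R →ₗ[ℝ] R →ₗ[ℝ] ℝ)

/-- The graph-type Dirac structure associated to a form on a subspace. -/
def diracL : Submodule ℝ (V × Module.Dual ℝ V) where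
  carrier := {p | ∃ h : p.1 ∈ R, ∀ y : R, p.2 y.1 = θ ⟨p.1, h⟩ y}
  zero_mem' := by
    refine ⟨R.zero_mem, fun y => ?_⟩
    have e : (⟨(0 : V), R.zero_mem⟩ : R) = 0 := rfl
    show (0 : ℝ) = θ ⟨(0 : V), R.zero_mem⟩ y
    rw [e]; simp
  add_mem' := by
    rintro p q ⟨hp, hp2⟩ ⟨hq, hq2⟩
    refine ⟨R.add_mem hp hq, fun y => ?_⟩
    have e : (⟨p.1 + q.1, R.add_mem hp hq⟩ : R) = ⟨p.1, hp⟩ + ⟨q.1, hq⟩ :=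
      Subtype.ext rfl
    show p.2 y.1 + q.2 y.1 = θ ⟨p.1 + q.1, R.add_mem hp hq⟩ y
    rw [e, map_add, hp2 y, hq2 y]; rfl
  smul_mem' := by
    rintro c p ⟨hp, hp2⟩
    refine ⟨R.smul_mem c hp, fun y => ?_⟩
    have e : (⟨c • p.1, R.smul_mem c hp⟩ : R) = c • (⟨p.1, hp⟩ : R) :=
      Subtype.ext rfl
    show c • (p.2 y.1) = θ ⟨c • p.1, R.smul_mem c hp⟩ y
    rw [e, map_smul, hp2 y]; rfl

theorem mem_diracL {p : V × Module.Dual ℝ V} :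
    p ∈ diracL R θ ↔ ∃ h : p.1 ∈ R, ∀ y : R, p.2 y.1 = θ ⟨p.1, h⟩ y := Iff.rfl

theorem coe_diracL :
    (diracL R θ : Set (V × Module.Dual ℝ V)) =
      {p | ∃ h : p.1 ∈ R, ∀ y : R, p.2 y.1 = θ ⟨p.1, h⟩ y} := rfl

/-- Projection to the first factor, restricted to `diracL`. -/
noncomputable def diracFst : diracL R θ →ₗ[ℝ] V :=
  (LinearMap.fst ℝ V (Module.Dual ℝ V)).comp (diracL R θ).subtype

theorem diracFst_range : LinearMap.range (diracFst R θ) = R := by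
  apply le_antisymm
  · rintro x ⟨⟨p, hp, hp2⟩, rfl⟩
    exact hp
  · intro x hx
    obtain ⟨g, hg⟩ := LinearMap.exists_extend (θ ⟨x, hx⟩)
    refine ⟨⟨(x, g), hx, fun y => ?_⟩, rfl⟩
    exact DFunLike.congr_fun hg y

/-- The kernel of the projection is the dual annihilator of `R`. -/
noncomputable def diracKerEquiv : LinearMap.ker (diracFst R θ) ≃ₗ[ℝ] R.dualAnnihilator where
  toFun p := ⟨(p : diracL R θ).val.2, by
    obtain ⟨⟨q, hq, hq2⟩, hq0⟩ := p
    rw [Submodule.mem_dualAnnihilator]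
    intro w hw
    have hx0 : q.1 = 0 := hq0
    have h := hq2 ⟨w, hw⟩
    rw [h]
    have h0 : (⟨q.1, hq⟩ : R) = 0 := Subtype.ext hx0
    rw [h0]; simp⟩
  map_add' p q := rfl
  map_smul' c p := rfl
  invFun α := ⟨⟨(0, α.1), R.zero_mem, fun y => by
      have hα := α.2
      rw [Submodule.mem_dualAnnihilator] at hα
      have e : (⟨(0 : V), R.zero_mem⟩ : R) = 0 := rfl
      show α.1 y.1 = θ ⟨(0 : V), R.zero_mem⟩ y
      rw [e, hα y.1 y.2]; simp⟩, rfl⟩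
  left_inv := by
    rintro ⟨⟨q, hq⟩, hq0⟩
    apply Subtype.ext; apply Subtype.ext
    have hx0 : q.1 = 0 := hq0
    exact Prod.ext hx0.symm rfl
  right_inv := by rintro ⟨α, hα⟩; rfl

theorem finrank_aux {M : Type*} [AddCommGroup M] [Module ℝ M] [FiniteDimensional ℝ M]
    [FiniteDimensional ℝ V] (f : M →ₗ[ℝ] V) (hr : LinearMap.range f = R)
    (e : LinearMap.ker f ≃ₗ[ℝ] R.dualAnnihilator) :
    Module.finrank ℝ M = Module.finrank ℝ V := by
  have h1 : Module.finrank ℝ (LinearMap.range f) +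
      Module.finrank ℝ (LinearMap.ker f) = Module.finrank ℝ M :=
    LinearMap.finrank_range_add_finrank_ker _
  have hker : Module.finrank ℝ (LinearMap.ker f) =
      Module.finrank ℝ R.dualAnnihilator := e.finrank_eq
  have h2 : Module.finrank ℝ R.dualAnnihilator = Module.finrank ℝ (V ⧸ R) :=
    (Subspace.quotEquivAnnihilator R).finrank_eq.symm
  have h3 : Module.finrank ℝ (V ⧸ R) + Module.finrank ℝ R = Module.finrank ℝ V :=
    Submodule.finrank_quotient_add_finrank R
  rw [hr, hker, h2] at h1
  omega

theorem diracL_finrank [FiniteDimensional ℝ V] :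
    Module.finrank ℝ (diracL R θ) = Module.finrank ℝ V :=
  finrank_aux (M := diracL R θ) R (diracFst R θ) (diracFst_range R θ) (diracKerEquiv R θ)

end aux

/-- Given a subspace `R ⊆ V` and a skew-symmetric bilinear form `θ` on `R`, the set
`L = {(X,α) : X ∈ R, α|_R = i_X θ}` is a vector Dirac structure on `V` with `pr₁(L) = R`
and induced form `θ`. -/
theorem stmt_6 (V : Type*) [AddCommGroup V] [Module ℝ V] [FiniteDimensional ℝ V]
    (R : Submodule ℝ V) (θ : R →ₗ[ℝ] R →ₗ[ℝ] ℝ)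
    (hθ : ∀ x y : R, θ x y = - θ y x) :
    ∃ L : Submodule ℝ (V × Module.Dual ℝ V),
      (L : Set (V × Module.Dual ℝ V)) =
        {p | ∃ h : p.1 ∈ R, ∀ y : R, p.2 y.1 = θ ⟨p.1, h⟩ y} ∧
      (∀ z ∈ L, ∀ w ∈ L, z.2 w.1 + w.2 z.1 = 0) ∧
      Module.finrank ℝ L = Module.finrank ℝ V ∧
      Submodule.map (LinearMap.fst ℝ V (Module.Dual ℝ V)) L = R ∧
      (∀ (X : V) (α : Module.Dual ℝ V), (X, α) ∈ L →
        ∀ (hX : X ∈ R) (y : R), α y.1 = θ ⟨X, hX⟩ y) := by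
  refine ⟨diracL R θ, coe_diracL R θ, ?_, diracL_finrank R θ, ?_, ?_⟩
  · rintro z ⟨hz, hz2⟩ w ⟨hw, hw2⟩
    rw [hz2 ⟨w.1, hw⟩, hw2 ⟨z.1, hz⟩, hθ]
    ring
  · have := diracFst_range R θ
    rw [diracFst, LinearMap.range_comp, Submodule.range_subtype] at this
    exact this
  · rintro X α ⟨hX', h2⟩ hX y
    have e : (⟨X, hX⟩ : R) = ⟨X, hX'⟩ := rfl
    rw [e]; exact h2 y
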